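/- If test t is Blackwell more informative than test d (i.e., d is a garbling of t: there exists a stochastic matrix M on {h,l} with π_d(·|θ) = M ∘ π_t(·|θ) for all θ), and π_t is increasing, then t is more accurate than d. -/
import Mathlib


open Set

/-- If `d` is a garbling of `t` (Blackwell: `πd = a·πt + b·(1−πt)` with `a, b ∈ [0,1]`) and
`πt` is increasing, then `t` is more accurate than `d`. -/
theorem stmt_7 (Θ : Set ℝ) (πt πd : ℝ → ℝ) (a b : ℝ)
    (ha : a ∈ Icc (0:ℝ) 1) (hb : b ∈ Icc (0:ℝ) 1)
    (hrt : ∀ θ ∈ Θ, πt θ ∈ Icc (0:ℝ) 1)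
    (hgarble : ∀ θ ∈ Θ, πd θ = a * πt θ + b * (1 - πt θ))
    (hmono : ∀ θ ∈ Θ, ∀ θ' ∈ Θ, θ ≤ θ' → πt θ ≤ πt θ') :
    ∀ θ ∈ Θ, ∀ θ' ∈ Θ, θ' < θ →
      πt θ * πd θ' ≥ πd θ * πt θ' ∧
      (1 - πt θ) * (1 - πd θ') ≤ (1 - πd θ) * (1 - πt θ') := by
  intro θ hθ θ' hθ' hlt
  have hle := hmono θ' hθ' θ hθ hlt.le
  rw [hgarble θ hθ, hgarble θ' hθ']
  constructor
  · nlinarith [hb.1, mul_nonneg hb.1 (sub_nonneg.2 hle)]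
  · nlinarith [sub_nonneg.2 ha.2, mul_nonneg (sub_nonneg.2 ha.2) (sub_nonneg.2 hle)]
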